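/- Let 𝒢 be a groupoid, H a group regarded as a one-object groupoid with unique object ⋆, and F : 𝒢 → H a functor. Let 𝒢^F denote the wide subgroupoid of 𝒢 whose morphisms are exactly those morphisms g with F(g) the neutral element of H. Assume that for every object G of 𝒢 and every h ∈ H there exists a morphism g : G → K in 𝒢 with F(g) = h. Then the fully faithful functor Φ_F : 𝒢^F → F ↓ ⋆, sending an object G to (G, identity of ⋆) and a morphism to itself, is an equivalence of categories. -/

import Mathlib

open CategoryTheory

universe w v u

/-- The wide subgroupoid `𝒢^F` of `𝒢`: same objects, morphisms those `g` with `F g = 1`. -/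
def WideSub {𝒢 : Type u} [Groupoid.{v} 𝒢] {H : Type w} [Group H]
    (F : 𝒢 ⥤ SingleObj H) : Type u := 𝒢

instance WideSub.category {𝒢 : Type u} [Groupoid.{v} 𝒢] {H : Type w} [Group H]
    (F : 𝒢 ⥤ SingleObj H) : Category (WideSub F) where
  Hom a b := {f : (show 𝒢 from a) ⟶ (show 𝒢 from b) // F.map f = (1 : H)}
  id a := ⟨𝟙 (show 𝒢 from a), by rw [F.map_id]; rfl⟩
  comp f g := ⟨f.1 ≫ g.1, by rw [F.map_comp, f.2, g.2]; simp [SingleObj.comp_as_mul]⟩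
  id_comp f := Subtype.ext (Category.id_comp f.1)
  comp_id f := Subtype.ext (Category.comp_id f.1)
  assoc f g h := Subtype.ext (Category.assoc f.1 g.1 h.1)

/-- The functor `Φ_F : 𝒢^F → F ↓ ⋆` sending `G` to `(G, 𝟙 ⋆)` and a morphism to itself. -/
def PhiF {𝒢 : Type u} [Groupoid.{v} 𝒢] {H : Type w} [Group H]
    (F : 𝒢 ⥤ SingleObj H) : WideSub F ⥤ CostructuredArrow F (SingleObj.star H) where
  obj a := CostructuredArrow.mk (𝟙 (F.obj (show 𝒢 from a)))
  map {a b} g := CostructuredArrow.homMk g.1 (by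
    simp only [CostructuredArrow.mk_hom_eq_self]
    rw [g.2]
    exact mul_one 1)

/-- if every element of `H` is realized by some morphism out of every object,
then `Φ_F` is an equivalence of categories. -/
theorem stmt_3 {𝒢 : Type u} [Groupoid.{v} 𝒢] {H : Type w} [Group H]
    (F : 𝒢 ⥤ SingleObj H)
    (hsurj : ∀ (G : 𝒢) (h : H), ∃ (K : 𝒢) (g : G ⟶ K), F.map g = h) :
    (PhiF F).IsEquivalence := by
  have full : (PhiF F).Full := ⟨fun {a b} f => by
    refine ⟨⟨f.left, ?_⟩, ?_⟩
    · have := CostructuredArrow.w f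
      exact (one_mul (F.map f.left : H)).symm.trans this
    · apply CostructuredArrow.hom_ext
      rfl⟩
  have faithful : (PhiF F).Faithful := ⟨fun {a b} f g h => by
    apply Subtype.ext
    exact congrArg CommaMorphism.left h⟩
  have ess : (PhiF F).EssSurj := ⟨fun Y => by
    obtain ⟨K, g, hg⟩ := hsurj Y.left Y.hom
    refine ⟨(K : WideSub F), ⟨CostructuredArrow.isoMk (asIso (Groupoid.inv g)) ?_⟩⟩
    simp [PhiF, SingleObj.comp_as_mul, ← hg, ← SingleObj.inv_as_inv]⟩
  exact { }
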